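/- Let P be a poset with least element 0 and Z(P)^× ≠ ∅. Then Ann(P) = Max(𝔄), i.e., the annihilator prime ideals of P are exactly the maximal elements (under set inclusion) of the family 𝔄 := {ann(x) : x ∈ P\{0}}. In particular, if P satisfies the ascending chain condition for annihilators, then Ann(P) ≠ ∅. -/

import Mathlib

/-- `L(x,y) = {z : z ≤ x ∧ z ≤ y}`, where the least element `0` of the poset is `⊥`. -/
def LSet (P : Type*) [PartialOrder P] [OrderBot P] (x y : P) : Set P := {z | z ≤ x ∧ z ≤ y}

theorem LSet_comm (P : Type*) [PartialOrder P] [OrderBot P] (x y : P) :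
    LSet P x y = LSet P y x := by
  ext z; exact ⟨fun h => ⟨h.2, h.1⟩, fun h => ⟨h.2, h.1⟩⟩

/-- The annihilator of `x`: `ann(x) = {y : L(x,y) = {0}}`. -/
def ann (P : Type*) [PartialOrder P] [OrderBot P] (x : P) : Set P := {y | LSet P x y = {⊥}}

theorem mem_ann_comm (P : Type*) [PartialOrder P] [OrderBot P] (x y : P) :
    y ∈ ann P x ↔ x ∈ ann P y := by
  simp only [ann, Set.mem_setOf_eq, LSet_comm P x y]

/-- The set `Z(P)^× = Z(P) \ {0}` of nonzero zero-divisors of `P`. -/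
def ZDivX (P : Type*) [PartialOrder P] [OrderBot P] : Set P :=
  {x | x ≠ ⊥ ∧ ∃ y : P, y ≠ ⊥ ∧ LSet P x y = {⊥}}

/-- The zero-divisor graph `Γ(P)` on `Z(P)^×`. -/
def zdGraph (P : Type*) [PartialOrder P] [OrderBot P] : SimpleGraph (ZDivX P) where
  Adj a b := (a : P) ≠ (b : P) ∧ LSet P a b = {⊥}
  symm := by
    refine ⟨?_⟩; rintro a b ⟨h1, h2⟩
    exact ⟨fun h => h1 h.symm, by rw [LSet_comm]; exact h2⟩
  loopless := by refine ⟨?_⟩; rintro a ⟨h1, _⟩; exact h1 rfl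

/-- The equivalence `x ∼ y ↔ ann(x) = ann(y)` on `Z(P)^×`. -/
def annSetoid (P : Type*) [PartialOrder P] [OrderBot P] : Setoid (ZDivX P) where
  r a b := ann P a = ann P b
  iseqv := ⟨fun _ => rfl, Eq.symm, Eq.trans⟩

/-- The reduced zero-divisor graph `Γ_E(P)`, on equivalence classes of `Z(P)^×`. -/
def redGraph (P : Type*) [PartialOrder P] [OrderBot P] :
    SimpleGraph (Quotient (annSetoid P)) where
  Adj := Quotient.lift₂ (fun a b => LSet P (a : P) (b : P) = {⊥}) (by
    intro a b a' b' ha hb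
    have ha' : ann P (a : P) = ann P (a' : P) := ha
    have hb' : ann P (b : P) = ann P (b' : P) := hb
    apply propext
    constructor
    · intro h
      have h1 : (b : P) ∈ ann P (a : P) := h
      rw [ha', mem_ann_comm, hb', mem_ann_comm] at h1
      exact h1
    · intro h
      have h1 : (b' : P) ∈ ann P (a' : P) := h
      rw [← ha', mem_ann_comm, ← hb', mem_ann_comm] at h1
      exact h1)
  symm := by
    refine ⟨?_⟩; intro x y
    refine Quotient.inductionOn₂ x y ?_
    intro a b h
    have h' : LSet P (a : P) (b : P) = {⊥} := h
    show LSet P (b : P) (a : P) = {⊥}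
    rw [LSet_comm]; exact h'
  loopless := by
    refine ⟨?_⟩; intro x
    refine Quotient.inductionOn x ?_
    intro a h
    have h' : LSet P (a : P) (a : P) = {⊥} := h
    have hm : (a : P) ∈ LSet P (a : P) (a : P) := ⟨le_refl _, le_refl _⟩
    rw [h'] at hm
    exact a.2.1 hm
/-- `I` is an ideal of the poset `P`: a nonempty downward-closed subset. -/
def IsIdeal (P : Type*) [PartialOrder P] [OrderBot P] (I : Set P) : Prop :=
  I.Nonempty ∧ ∀ x ∈ I, ∀ y : P, y ≤ x → y ∈ I

/-- `I` is a prime ideal of the poset `P`: a proper ideal such that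
`L(x,y) ⊆ I` implies `x ∈ I` or `y ∈ I`. -/
def IsPrimeIdeal (P : Type*) [PartialOrder P] [OrderBot P] (I : Set P) : Prop :=
  IsIdeal P I ∧ I ≠ Set.univ ∧ ∀ x y : P, LSet P x y ⊆ I → x ∈ I ∨ y ∈ I

/-- The family `𝔄 = {ann(x) : x ∈ P \ {0}}`. -/
def AnnFam (P : Type*) [PartialOrder P] [OrderBot P] : Set (Set P) :=
  {I | ∃ x : P, x ≠ ⊥ ∧ ann P x = I}

/-- `Ann(P)`, the set of annihilator prime ideals of `P`. -/
def AnnPrimes (P : Type*) [PartialOrder P] [OrderBot P] : Set (Set P) :=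
  {I | IsPrimeIdeal P I ∧ ∃ x : P, ann P x = I}

/-- `P` satisfies the ACC for annihilators: every nonempty subfamily of `𝔄` has a
maximal element. -/
def ACCAnn (P : Type*) [PartialOrder P] [OrderBot P] : Prop :=
  ∀ S : Set (Set P), S ⊆ AnnFam P → S.Nonempty → ∃ I ∈ S, ∀ J ∈ S, I ⊆ J → I = J

/-- `Ann(P) = Max(𝔄)`; in particular, if `P` satisfies the ACC for annihilators,
then `Ann(P) ≠ ∅`. -/
theorem stmt9 (P : Type*) [PartialOrder P] [OrderBot P] (hZ : (ZDivX P).Nonempty) :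
    AnnPrimes P = {I ∈ AnnFam P | ∀ J ∈ AnnFam P, I ⊆ J → I = J} ∧
      (ACCAnn P → (AnnPrimes P).Nonempty) := by
  have hann_bot : ∀ x : P, (⊥ : P) ∈ ann P x := by
    intro x
    show LSet P x ⊥ = {⊥}
    ext z
    constructor
    · rintro ⟨_, hz⟩; exact le_bot_iff.mp hz
    · intro hz; rw [Set.mem_singleton_iff] at hz; subst hz; exact ⟨bot_le, le_rfl⟩
  have hmono : ∀ v x : P, v ≤ x → ann P x ⊆ ann P v := by
    intro v x hvx y hy
    have hy' : LSet P x y = {⊥} := hy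
    show LSet P v y = {⊥}
    ext z
    constructor
    · rintro ⟨h1, h2⟩
      have : z ∈ LSet P x y := ⟨h1.trans hvx, h2⟩
      rw [hy'] at this; exact this
    · intro hz; rw [Set.mem_singleton_iff] at hz; subst hz; exact ⟨bot_le, bot_le⟩
  have hself : ∀ x : P, x ≠ ⊥ → x ∉ ann P x := by
    intro x hx hmem
    have hmem' : LSet P x x = {⊥} := hmem
    have : x ∈ LSet P x x := ⟨le_rfl, le_rfl⟩
    rw [hmem'] at this
    exact hx this
  have hne : ∀ x y : P, LSet P x y ≠ {⊥} → ∃ v ∈ LSet P x y, v ≠ ⊥ := by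
    intro x y h
    by_contra h'
    push_neg at h'
    apply h
    ext z
    constructor
    · intro hz; exact h' z hz
    · intro hz; rw [Set.mem_singleton_iff] at hz; subst hz; exact ⟨bot_le, bot_le⟩
  have heq : AnnPrimes P = {I ∈ AnnFam P | ∀ J ∈ AnnFam P, I ⊆ J → I = J} := by
    ext I
    simp only [AnnPrimes, AnnFam, Set.mem_setOf_eq, Set.mem_sep_iff]
    constructor
    · rintro ⟨hIprime, x, hx⟩
      have hxne : x ≠ ⊥ := by
        intro h; subst h
        apply hIprime.2.1
        rw [← hx]
        ext y
        simp only [Set.mem_univ, iff_true]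
        show LSet P ⊥ y = {⊥}
        ext z
        constructor
        · rintro ⟨h1, _⟩; exact le_bot_iff.mp h1
        · intro hz; rw [Set.mem_singleton_iff] at hz; subst hz; exact ⟨le_rfl, bot_le⟩
      refine ⟨⟨x, hxne, hx⟩, ?_⟩
      rintro J ⟨y, hyne, rfl⟩ hIJ
      apply Set.Subset.antisymm hIJ
      intro w hw
      have hw' : LSet P y w = {⊥} := hw
      have hsub : LSet P y w ⊆ I := by
        rw [hw']
        intro z hz
        rw [Set.mem_singleton_iff] at hz; subst hz
        rw [← hx]; exact hann_bot x
      rcases hIprime.2.2 y w hsub with hy | hw'' 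
      · exact absurd (hIJ hy) (hself y hyne)
      · exact hw''
    · rintro ⟨⟨x, hxne, rfl⟩, hmax⟩
      refine ⟨⟨⟨⟨⊥, hann_bot x⟩, ?_⟩, ?_, ?_⟩, x, rfl⟩
      · intro y hy w hwy
        have h1 : x ∈ ann P y := (mem_ann_comm P x y).mp hy
        have h2 : x ∈ ann P w := hmono w y hwy h1
        exact (mem_ann_comm P x w).mpr h2
      · intro h
        exact hself x hxne (h ▸ Set.mem_univ x)
      · intro a b hab
        by_cases ha : a ∈ ann P x
        · exact Or.inl ha
        right
        have hLne : LSet P x a ≠ {⊥} := ha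
        obtain ⟨v, ⟨hvx, hva⟩, hvne⟩ := hne x a hLne
        have heqv : ann P x = ann P v := hmax (ann P v) ⟨v, hvne, rfl⟩ (hmono v x hvx)
        rw [heqv]
        show LSet P v b = {⊥}
        ext z
        constructor
        · rintro ⟨hzv, hzb⟩
          have hz : z ∈ ann P x := hab ⟨hzv.trans hva, hzb⟩
          have hz' : LSet P x z = {⊥} := hz
          have : z ∈ LSet P x z := ⟨hzv.trans hvx, le_rfl⟩
          rw [hz'] at this
          exact this
        · intro hz; rw [Set.mem_singleton_iff] at hz; subst hz; exact ⟨bot_le, bot_le⟩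
  refine ⟨heq, fun hACC => ?_⟩
  obtain ⟨x, hxne, _⟩ := hZ
  have hS : (AnnFam P).Nonempty := ⟨ann P x, x, hxne, rfl⟩
  obtain ⟨I, hI, hImax⟩ := hACC (AnnFam P) (subset_refl _) hS
  refine ⟨I, ?_⟩
  rw [heq]
  exact ⟨hI, hImax⟩
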